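/- Water-filling optimality for the total received power maximization (TRPM) problem: Let K be a finite nonempty index set of sensors, with parameters a_k > 0, b_k > 0, channel eigenvalues λ_k > 0, per-band power caps m_k > 0 for each k ∈ K, and a power budget E > 0. Let h ∈ ℝ and define p*_k = min(max(h·a_k − 1/(b_k·λ_k), 0), m_k) for each k ∈ K, and assume ∑_{k∈K} p*_k = E. Then for every allocation p : K → ℝ satisfying 0 ≤ p_k ≤ m_k for all k and ∑_{k∈K} p_k ≤ E, one has ∑_{k∈K} a_k·log(1 + b_k·λ_k·p_k) ≤ ∑_{k∈K} a_k·log(1 + b_k·λ_k·p*_k). -/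

import Mathlib

open Finset Real

/-- Water-filling optimality for the TRPM problem. -/
theorem trpm_waterfilling_optimal
    {K : Type*} [Fintype K] [Nonempty K]
    (a b l m : K → ℝ) (E : ℝ) (h : ℝ)
    (ha : ∀ k, 0 < a k) (hb : ∀ k, 0 < b k) (hl : ∀ k, 0 < l k)
    (hm : ∀ k, 0 < m k) (hE : 0 < E)
    (pstar : K → ℝ)
    (hpstar : ∀ k, pstar k = min (max (h * a k - 1 / (b k * l k)) 0) (m k))
    (hsum : ∑ k, pstar k = E) :
    ∀ p : K → ℝ, (∀ k, 0 ≤ p k) → (∀ k, p k ≤ m k) → (∑ k, p k ≤ E) →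
      ∑ k, a k * Real.log (1 + b k * l k * p k) ≤
        ∑ k, a k * Real.log (1 + b k * l k * pstar k) := by
  intro p hp0 hpm hpE
  have hp0' : ∀ k, 0 ≤ pstar k := fun k => by
    rw [hpstar k]; exact le_min (le_max_right _ _) (hm k).le
  -- h > 0
  have hhpos : 0 < h := by
    by_contra hh
    push_neg at hh
    have hz : ∀ k, pstar k = 0 := by
      intro k
      have hc : 0 < b k * l k := mul_pos (hb k) (hl k)
      have h1 : 0 < 1 / (b k * l k) := by positivity
      have h2 : h * a k ≤ 0 := mul_nonpos_of_nonpos_of_nonneg hh (ha k).le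
      have : h * a k - 1 / (b k * l k) ≤ 0 := by linarith
      rw [hpstar k, max_eq_right this, min_eq_left (hm k).le]
    rw [Finset.sum_congr rfl (fun k _ => hz k)] at hsum
    simp at hsum
    linarith
  have key : ∀ k, a k * Real.log (1 + b k * l k * p k) -
      a k * Real.log (1 + b k * l k * pstar k) ≤ (1/h) * (p k - pstar k) := by
    intro k
    have hcpos : 0 < b k * l k := mul_pos (hb k) (hl k)
    set c := b k * l k with hc
    have h1 : 0 < 1 + c * p k := by nlinarith [hp0 k]
    have h2 : 0 < 1 + c * pstar k := by nlinarith [hp0' k]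
    have hlog : Real.log (1 + c * p k) - Real.log (1 + c * pstar k) ≤
        c * (p k - pstar k) / (1 + c * pstar k) := by
      have hd := Real.log_le_sub_one_of_pos (div_pos h1 h2)
      rw [Real.log_div h1.ne' h2.ne'] at hd
      have heq : (1 + c * p k) / (1 + c * pstar k) - 1 =
          c * (p k - pstar k) / (1 + c * pstar k) := by
        field_simp; ring
      linarith [heq ▸ hd]
    have hmul : a k * Real.log (1 + c * p k) - a k * Real.log (1 + c * pstar k) ≤
        a k * (c * (p k - pstar k) / (1 + c * pstar k)) := by
      nlinarith [mul_le_mul_of_nonneg_left hlog (ha k).le]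
    refine hmul.trans ?_
    -- case analysis on the clamp
    rcases le_total (h * a k - 1 / c) 0 with ht | ht
    · -- pstar k = 0
      have hps : pstar k = 0 := by
        rw [hpstar k, max_eq_right ht, min_eq_left (hm k).le]
      rw [hps]
      have hac : a k * c ≤ 1 / h := by
        rw [le_div_iff₀ hhpos]
        have : h * a k ≤ 1 / c := by linarith
        calc a k * c * h = (h * a k) * c := by ring
          _ ≤ (1 / c) * c := by nlinarith
          _ = 1 := by field_simp
      have hg : a k * (c * (p k - 0) / (1 + c * 0)) = a k * c * p k := by
        ring_nf
      rw [hg]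
      have : 1 / h * (p k - 0) = 1 / h * p k := by ring
      rw [this]
      nlinarith [hp0 k]
    · rcases le_total (m k) (h * a k - 1 / c) with ht2 | ht2
      · -- pstar k = m k
        have hps : pstar k = m k := by
          rw [hpstar k, max_eq_left ht, min_eq_right ht2]
        rw [hps]
        have hge : 1 / h ≤ a k * c / (1 + c * m k) := by
          rw [div_le_div_iff₀ hhpos (by nlinarith [hm k] : (0:ℝ) < 1 + c * m k)]
          have : 1 / c + m k ≤ h * a k := by linarith
          have hcc : (1 / c + m k) * c = 1 + c * m k := by field_simp
          nlinarith
        have hple : p k - m k ≤ 0 := by linarith [hpm k]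
        have hmk2 : (0:ℝ) < 1 + c * m k := by nlinarith [hm k]
        have : a k * (c * (p k - m k) / (1 + c * m k)) =
            (a k * c / (1 + c * m k)) * (p k - m k) := by ring
        rw [this]
        nlinarith [hge, hple, one_div_pos.mpr hhpos]
      · -- interior: pstar k = h * a k - 1 / c
        have hps : pstar k = h * a k - 1 / c := by
          rw [hpstar k, max_eq_left ht, min_eq_left ht2]
        rw [hps]
        have hone : 1 + c * (h * a k - 1 / c) = c * h * a k := by
          field_simp; ring
        rw [hone]
        have : a k * (c * (p k - (h * a k - 1 / c)) / (c * h * a k)) =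
            (1 / h) * (p k - (h * a k - 1 / c)) := by
          have hane := (ha k).ne'
          have hcne := hcpos.ne'
          have hhne := hhpos.ne'
          field_simp
        rw [this]
  calc ∑ k, a k * Real.log (1 + b k * l k * p k)
      ≤ ∑ k, (a k * Real.log (1 + b k * l k * pstar k) + (1/h) * (p k - pstar k)) := by
        apply Finset.sum_le_sum
        intro k _
        linarith [key k]
    _ = ∑ k, a k * Real.log (1 + b k * l k * pstar k) + (1/h) * (∑ k, p k - E) := by
        rw [Finset.sum_add_distrib, ← Finset.mul_sum, Finset.sum_sub_distrib, hsum]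
    _ ≤ ∑ k, a k * Real.log (1 + b k * l k * pstar k) := by
        have : (1/h) * (∑ k, p k - E) ≤ 0 :=
          mul_nonpos_of_nonneg_of_nonpos (by positivity) (by linarith)
        linarith
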